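/- Fidelity decay of a Bell-diagonal state under amplitude damping memories: let γ ∈ [0,1] and let A_γ be the qubit amplitude damping channel with Kraus operators K₀ = |0⟩⟨0| + √(1−γ)|1⟩⟨1| and K₁ = √γ|0⟩⟨1|. Let α, β ∈ ℝ with α + β ≥ 0, α − β ≥ 0, and 1/2 − α ≥ 0, and let σ⁰ := (α+β)Φ⁺ + (α−β)Φ⁻ + (1/2 − α)Ψ⁺ + (1/2 − α)Ψ⁻ (a two-qubit density matrix). Then for every m ∈ ℕ, ⟨Φ⁺| (A_γ^{∘m} ⊗ A_γ^{∘m})(σ⁰) |Φ⁺⟩ = α·λ_m² + (β − 1/2)·λ_m + 1/2, where λ_m := (1−γ)^m and A_γ^{∘m} denotes the m-fold composition of A_γ. -/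

import Mathlib

open Matrix BigOperators
open scoped Kronecker

noncomputable section

/-- Kraus operators of the qubit amplitude damping channel `A_γ`:
`K₀ = |0⟩⟨0| + √(1-γ)|1⟩⟨1|`, `K₁ = √γ |0⟩⟨1|`. -/
def adKraus (γ : ℝ) : Fin 2 → Matrix (Fin 2) (Fin 2) ℂ := fun b =>
  if b = 0 then
    Matrix.of fun i j =>
      if i = 0 ∧ j = 0 then 1 else if i = 1 ∧ j = 1 then (Real.sqrt (1 - γ) : ℂ) else 0
  else
    Matrix.of fun i j => if i = 0 ∧ j = 1 then (Real.sqrt γ : ℂ) else 0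

/-- A Kraus operator `K_{i₁} ⋯ K_{i_m}` of the `m`-fold composition `A_γ^{∘m}`. -/
def adKrausWord (γ : ℝ) (m : ℕ) (i : Fin m → Fin 2) : Matrix (Fin 2) (Fin 2) ℂ :=
  (List.ofFn fun k => adKraus γ (i k)).prod

/-- The two-qubit channel `A_γ^{∘m} ⊗ A_γ^{∘m}`, written in terms of the Kraus
operators of the `m`-fold composition `A_γ^{∘m}`. -/
def adTensorIter (γ : ℝ) (m : ℕ) (σ : Matrix (Fin 2 × Fin 2) (Fin 2 × Fin 2) ℂ) :
    Matrix (Fin 2 × Fin 2) (Fin 2 × Fin 2) ℂ :=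
  ∑ i : Fin m → Fin 2, ∑ j : Fin m → Fin 2,
    (adKrausWord γ m i ⊗ₖ adKrausWord γ m j) * σ * (adKrausWord γ m i ⊗ₖ adKrausWord γ m j)ᴴ

/-- Bell state vector `|Φ⁺⟩`. -/
def phiPlus : Fin 2 × Fin 2 → ℂ :=
  fun k => if k = (0, 0) ∨ k = (1, 1) then ((Real.sqrt 2 : ℂ))⁻¹ else 0

/-- Bell state vector `|Φ⁻⟩`. -/
def phiMinus : Fin 2 × Fin 2 → ℂ :=
  fun k => if k = (0, 0) then ((Real.sqrt 2 : ℂ))⁻¹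
    else if k = (1, 1) then -((Real.sqrt 2 : ℂ))⁻¹ else 0

/-- Bell state vector `|Ψ⁺⟩`. -/
def psiPlus : Fin 2 × Fin 2 → ℂ :=
  fun k => if k = (0, 1) ∨ k = (1, 0) then ((Real.sqrt 2 : ℂ))⁻¹ else 0

/-- Bell state vector `|Ψ⁻⟩`. -/
def psiMinus : Fin 2 × Fin 2 → ℂ :=
  fun k => if k = (0, 1) then ((Real.sqrt 2 : ℂ))⁻¹
    else if k = (1, 0) then -((Real.sqrt 2 : ℂ))⁻¹ else 0

/-- Rank-one projector `|ψ⟩⟨ψ|`. -/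
def projv {m' : Type*} (ψ : m' → ℂ) : Matrix m' m' ℂ := Matrix.vecMulVec ψ (star ψ)

/-- Fidelity `⟨ψ|ρ|ψ⟩` of a state `ρ` with a pure state `|ψ⟩`. -/
def fidTo {m' : Type*} [Fintype m'] (ψ : m' → ℂ) (ρ : Matrix m' m' ℂ) : ℂ :=
  ∑ i, ∑ j, (starRingEnd ℂ) (ψ i) * ρ i j * ψ j

def Smat (a b c d e : ℝ) : Matrix (Fin 2 × Fin 2) (Fin 2 × Fin 2) ℂ :=
  Matrix.of fun p q =>
    if p = (0,0) ∧ q = (0,0) then (a : ℂ)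
    else if p = (0,1) ∧ q = (0,1) then (b : ℂ)
    else if p = (1,0) ∧ q = (1,0) then (c : ℂ)
    else if p = (1,1) ∧ q = (1,1) then (d : ℂ)
    else if p = (0,0) ∧ q = (1,1) then (e : ℂ)
    else if p = (1,1) ∧ q = (0,0) then (e : ℂ)
    else 0

lemma Smat_congr {a b c d e a' b' c' d' e' : ℝ} (ha : a = a') (hb : b = b') (hc : c = c')
    (hd : d = d') (he : e = e') : Smat a b c d e = Smat a' b' c' d' e' := by
  subst ha hb hc hd he; rfl

lemma inv_sqrt2_mul : ((Real.sqrt 2 : ℂ))⁻¹ * ((Real.sqrt 2 : ℂ))⁻¹ = (2 : ℂ)⁻¹ := by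
  rw [← mul_inv, ← Complex.ofReal_mul, Real.mul_self_sqrt (by norm_num)]; norm_num

lemma sigma0_eq (α β : ℝ) :
    (((α + β : ℝ) : ℂ) • projv phiPlus + ((α - β : ℝ) : ℂ) • projv phiMinus
        + ((1 / 2 - α : ℝ) : ℂ) • projv psiPlus + ((1 / 2 - α : ℝ) : ℂ) • projv psiMinus)
    = Smat α (1/2 - α) (1/2 - α) α β := by
  ext ⟨i, j⟩ ⟨k, l⟩
  fin_cases i <;> fin_cases j <;> fin_cases k <;> fin_cases l <;>
    simp [Smat, projv, phiPlus, phiMinus, psiPlus, psiMinus, Matrix.vecMulVec_apply,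
      Complex.conj_ofReal, inv_sqrt2_mul, Prod.ext_iff] <;>
    push_cast <;> ring_nf

lemma step (γ : ℝ) (hγ0 : 0 ≤ γ) (hγ1 : γ ≤ 1) (a b c d e : ℝ) :
    (∑ x : Fin 2, ∑ y : Fin 2,
      (adKraus γ x ⊗ₖ adKraus γ y) * Smat a b c d e * (adKraus γ x ⊗ₖ adKraus γ y)ᴴ)
    = Smat (a + γ*b + γ*c + γ^2*d) ((1-γ)*b + γ*(1-γ)*d) ((1-γ)*c + γ*(1-γ)*d)
        ((1-γ)^2*d) ((1-γ)*e) := by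
  have h1γ : (0:ℝ) ≤ 1 - γ := by linarith
  have hs : (Real.sqrt (1-γ) : ℂ) * (Real.sqrt (1-γ) : ℂ) = ((1-γ : ℝ) : ℂ) := by
    rw [← Complex.ofReal_mul, Real.mul_self_sqrt h1γ]
  have ht : (Real.sqrt γ : ℂ) * (Real.sqrt γ : ℂ) = ((γ : ℝ) : ℂ) := by
    rw [← Complex.ofReal_mul, Real.mul_self_sqrt hγ0]
  have hs2 : (Real.sqrt (1-γ) : ℂ)^2 = ((1-γ : ℝ) : ℂ) := by rw [pow_two, hs]
  have ht2 : (Real.sqrt γ : ℂ)^2 = ((γ : ℝ) : ℂ) := by rw [pow_two, ht]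
  have hs4 : (Real.sqrt (1-γ) : ℂ)^4 = ((1-γ : ℝ) : ℂ)^2 := by
    rw [show 4=2*2 from rfl, pow_mul, hs2]
  have ht4 : (Real.sqrt γ : ℂ)^4 = ((γ : ℝ) : ℂ)^2 := by
    rw [show 4=2*2 from rfl, pow_mul, ht2]
  ext ⟨i, j⟩ ⟨k, l⟩
  simp only [Fin.sum_univ_two, Matrix.add_apply, Matrix.mul_apply, Matrix.conjTranspose_apply,
    Matrix.kroneckerMap_apply, Fintype.sum_prod_type, adKraus, Smat, Matrix.of_apply]
  fin_cases i <;> fin_cases j <;> fin_cases k <;> fin_cases l <;>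
    simp [Fin.sum_univ_two, Complex.conj_ofReal, Prod.ext_iff] <;>
    ring_nf <;>
    simp [hs2, ht2, hs4, ht4] <;>
    push_cast <;> ring_nf

lemma adTensorIter_zero (γ : ℝ) (σ : Matrix (Fin 2 × Fin 2) (Fin 2 × Fin 2) ℂ) :
    adTensorIter γ 0 σ = σ := by
  have h : ∀ i : Fin 0 → Fin 2, adKrausWord γ 0 i = 1 := by
    intro i; simp [adKrausWord]
  simp [adTensorIter, h, Matrix.one_kronecker_one]

lemma key_sum (m : ℕ) (G : (Fin (m+1) → Fin 2) → Matrix (Fin 2 × Fin 2) (Fin 2 × Fin 2) ℂ) :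
    ∑ i, G i = ∑ x : Fin 2, ∑ t : Fin m → Fin 2, G (Fin.cons x t) := by
  rw [← Equiv.sum_comp (Fin.consEquiv fun _ : Fin (m+1) => Fin 2) G, Fintype.sum_prod_type]
  simp [Fin.consEquiv]

lemma adKrausWord_cons (γ : ℝ) (m : ℕ) (x : Fin 2) (t : Fin m → Fin 2) :
    adKrausWord γ (m+1) (Fin.cons x t) = adKraus γ x * adKrausWord γ m t := by
  simp [adKrausWord, List.ofFn_succ]

lemma adTensorIter_succ (γ : ℝ) (m : ℕ) (σ : Matrix (Fin 2 × Fin 2) (Fin 2 × Fin 2) ℂ) :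
    adTensorIter γ (m+1) σ = ∑ x : Fin 2, ∑ y : Fin 2,
      (adKraus γ x ⊗ₖ adKraus γ y) * adTensorIter γ m σ * (adKraus γ x ⊗ₖ adKraus γ y)ᴴ := by
  unfold adTensorIter
  rw [key_sum]
  simp only [key_sum]
  simp only [adKrausWord_cons, Matrix.mul_kronecker_mul, Matrix.conjTranspose_mul,
    Finset.mul_sum, Finset.sum_mul, mul_assoc]
  refine Finset.sum_congr rfl fun x _ => ?_
  rw [Finset.sum_comm]

lemma evolved (γ : ℝ) (hγ0 : 0 ≤ γ) (hγ1 : γ ≤ 1) (α β : ℝ) (m : ℕ) :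
    adTensorIter γ m (Smat α (1/2 - α) (1/2 - α) α β)
    = Smat (1 - (1-γ)^m + α*((1-γ)^m)^2) ((1-γ)^m/2 - α*((1-γ)^m)^2)
        ((1-γ)^m/2 - α*((1-γ)^m)^2) (α*((1-γ)^m)^2) (β*(1-γ)^m) := by
  induction m with
  | zero =>
      rw [adTensorIter_zero]
      exact Smat_congr (by ring) (by ring) (by ring) (by ring) (by ring)
  | succ m ih =>
      rw [adTensorIter_succ, ih, step γ hγ0 hγ1]
      exact Smat_congr (by ring) (by ring) (by ring) (by ring) (by ring)

lemma fid_Smat (a b c d e : ℝ) :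
    fidTo phiPlus (Smat a b c d e) = (((a + d)/2 + e : ℝ) : ℂ) := by
  simp [fidTo, Fintype.sum_prod_type, Fin.sum_univ_two, phiPlus, Smat,
    Complex.conj_ofReal, Prod.ext_iff, mul_comm, mul_assoc, mul_left_comm, inv_sqrt2_mul]
  push_cast
  ring_nf

/-- **Fidelity decay of a Bell-diagonal state under amplitude damping memories.** -/
theorem bell_diagonal_fidelity_decay (γ : ℝ) (hγ0 : 0 ≤ γ) (hγ1 : γ ≤ 1)
    (α β : ℝ) (h1 : 0 ≤ α + β) (h2 : 0 ≤ α - β) (h3 : 0 ≤ 1 / 2 - α) (m : ℕ) :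
    fidTo phiPlus (adTensorIter γ m
      (((α + β : ℝ) : ℂ) • projv phiPlus + ((α - β : ℝ) : ℂ) • projv phiMinus
        + ((1 / 2 - α : ℝ) : ℂ) • projv psiPlus + ((1 / 2 - α : ℝ) : ℂ) • projv psiMinus))
      = ((α * ((1 - γ) ^ m) ^ 2 + (β - 1 / 2) * (1 - γ) ^ m + 1 / 2 : ℝ) : ℂ) := by
  rw [sigma0_eq, evolved γ hγ0 hγ1, fid_Smat]
  push_cast
  ring
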